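/- arXiv:2202.09340 — 2 statements merged into one kernel-verified Lean document; each statement's English description precedes it below -/
import Mathlib

section
/- Let f : ℝ^d → ℝ be L-Lipschitz with respect to the Euclidean norm, and σ > 0. Then for every x ∈ ℝ^d, the second moment of the antithetic-variable Stein gradient estimator integrand is bounded independently of σ: E_{δ∼N(0,σ²I)}[ ‖(δ/(2σ²)) · (f(x+δ) − f(x−δ))‖² ] ≤ L² d (d + 2). -/
open MeasureTheory Real

/-- The Gaussian probability measure `N(0, σ²I)` on `ℝ^d`, defined via its density
with respect to the Lebesgue measure. -/
noncomputable def gaussianMeasure (d : ℕ) (σ : ℝ) :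
    Measure (EuclideanSpace ℝ (Fin d)) :=
  volume.withDensity fun δ =>
    ENNReal.ofReal ((2 * π * σ ^ 2) ^ (-(d : ℝ) / 2) * Real.exp (-‖δ‖ ^ 2 / (2 * σ ^ 2)))

section OneDim

variable {b : ℝ}

lemma integrable_pow_mul_gauss (hb : 0 < b) (n : ℕ) :
    Integrable (fun t : ℝ => t ^ n * Real.exp (-b * t ^ 2)) := by
  have h := integrable_rpow_mul_exp_neg_mul_sq hb (s := (n : ℝ))
    (by have : (0:ℝ) ≤ n := Nat.cast_nonneg n; linarith)
  simpa [Real.rpow_natCast] using h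

lemma gauss_moment (hb : 0 < b) (n : ℕ) :
    ∫ t : ℝ, t ^ (2 * n) * Real.exp (-b * t ^ 2)
      = 2 * (b ^ (-(((2 * n : ℕ) : ℝ) + 1) / 2) * (1 / 2) * Real.Gamma ((((2 * n : ℕ) : ℝ) + 1) / 2)) := by
  have h1 : (fun t : ℝ => t ^ (2 * n) * Real.exp (-b * t ^ 2))
      = fun t : ℝ => |t| ^ (2 * n) * Real.exp (-b * |t| ^ 2) := by
    funext t
    simp [pow_mul, sq_abs]
  rw [h1, integral_comp_abs (f := fun t : ℝ => t ^ (2 * n) * Real.exp (-b * t ^ 2))]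
  rw [← integral_rpow_mul_exp_neg_mul_rpow two_pos (q := ((2 * n : ℕ) : ℝ))
    (by have : (0:ℝ) ≤ ((2 * n : ℕ) : ℝ) := Nat.cast_nonneg _; linarith) hb]
  congr 1
  refine setIntegral_congr_fun measurableSet_Ioi fun t ht => ?_
  rw [Real.rpow_natCast]
  norm_cast

end OneDim

section OneDimVals

variable {b : ℝ}

lemma gauss_I2 (hb : 0 < b) :
    ∫ t : ℝ, t ^ 2 * Real.exp (-b * t ^ 2) = Real.sqrt (π / b) / (2 * b) := by
  have hsb : 0 < Real.sqrt b := Real.sqrt_pos.mpr hb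
  have h := gauss_moment hb 1
  norm_num at h
  simp only [neg_mul]
  rw [h]
  have hG : Real.Gamma ((3:ℝ) / 2) = Real.sqrt π / 2 := by
    rw [show ((3:ℝ)/2) = 1/2 + 1 by norm_num, Real.Gamma_add_one (by norm_num),
      Real.Gamma_one_half_eq]
    ring
  have hr : b ^ (-(3/2) : ℝ) = 1 / (Real.sqrt b * b) := by
    rw [show (-(3/2):ℝ) = -(1/2 + 1) by norm_num, Real.rpow_neg hb.le,
      Real.rpow_add hb, Real.rpow_one, ← Real.sqrt_eq_rpow, one_div]
  rw [hG, hr, Real.sqrt_div pi_pos.le b]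
  field_simp

lemma gauss_I4 (hb : 0 < b) :
    ∫ t : ℝ, t ^ 4 * Real.exp (-b * t ^ 2) = 3 * Real.sqrt (π / b) / (4 * b ^ 2) := by
  have hsb : 0 < Real.sqrt b := Real.sqrt_pos.mpr hb
  have h := gauss_moment hb 2
  norm_num at h
  simp only [neg_mul]
  rw [h]
  have hG : Real.Gamma ((5:ℝ) / 2) = 3 * Real.sqrt π / 4 := by
    rw [show ((5:ℝ)/2) = 3/2 + 1 by norm_num, Real.Gamma_add_one (by norm_num),
      show ((3:ℝ)/2) = 1/2 + 1 by norm_num, Real.Gamma_add_one (by norm_num),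
      Real.Gamma_one_half_eq]
    ring
  have hr : b ^ (-(5/2) : ℝ) = 1 / (Real.sqrt b * b ^ 2) := by
    rw [show (-(5/2):ℝ) = -(1/2 + 2) by norm_num, Real.rpow_neg hb.le,
      Real.rpow_add hb, ← Real.sqrt_eq_rpow,
      show ((2:ℝ)) = ((2:ℕ):ℝ) by norm_num, Real.rpow_natCast, one_div]
  rw [hG, hr, Real.sqrt_div pi_pos.le b]
  field_simp

end OneDimVals

section MultiDim

lemma gaussianMeasure_integral (d : ℕ) (σ : ℝ) (g : EuclideanSpace ℝ (Fin d) → ℝ) :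
    ∫ δ, g δ ∂(gaussianMeasure d σ)
      = ∫ δ, ((2 * π * σ ^ 2) ^ (-(d : ℝ) / 2) * Real.exp (-‖δ‖ ^ 2 / (2 * σ ^ 2))) * g δ := by
  have hv : Measurable fun δ : EuclideanSpace ℝ (Fin d) =>
      (2 * π * σ ^ 2) ^ (-(d : ℝ) / 2) * Real.exp (-‖δ‖ ^ 2 / (2 * σ ^ 2)) := by fun_prop
  have h1 : ∫ δ, g δ ∂(volume.withDensity fun δ : EuclideanSpace ℝ (Fin d) =>
        ENNReal.ofReal ((2 * π * σ ^ 2) ^ (-(d : ℝ) / 2) * Real.exp (-‖δ‖ ^ 2 / (2 * σ ^ 2))))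
      = ∫ δ, (((2 * π * σ ^ 2) ^ (-(d : ℝ) / 2) * Real.exp (-‖δ‖ ^ 2 / (2 * σ ^ 2))).toNNReal) • g δ :=
    integral_withDensity_eq_integral_smul hv.real_toNNReal g
  rw [gaussianMeasure, h1]
  congr 1
  funext δ
  rw [NNReal.smul_def, Real.coe_toNNReal _ (by positivity), smul_eq_mul]

lemma gaussianMeasure_integrable_iff (d : ℕ) (σ : ℝ) (g : EuclideanSpace ℝ (Fin d) → ℝ) :
    Integrable g (gaussianMeasure d σ) ↔
      Integrable (fun δ => g δ *
        ((2 * π * σ ^ 2) ^ (-(d : ℝ) / 2) * Real.exp (-‖δ‖ ^ 2 / (2 * σ ^ 2)))) := by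
  have hv : Measurable fun δ : EuclideanSpace ℝ (Fin d) =>
      (2 * π * σ ^ 2) ^ (-(d : ℝ) / 2) * Real.exp (-‖δ‖ ^ 2 / (2 * σ ^ 2)) := by fun_prop
  have hto : ∀ δ : EuclideanSpace ℝ (Fin d),
      (ENNReal.ofReal ((2 * π * σ ^ 2) ^ (-(d : ℝ) / 2)
          * Real.exp (-‖δ‖ ^ 2 / (2 * σ ^ 2)))).toReal
        = (2 * π * σ ^ 2) ^ (-(d : ℝ) / 2) * Real.exp (-‖δ‖ ^ 2 / (2 * σ ^ 2)) :=
    fun δ => ENNReal.toReal_ofReal (by positivity)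
  rw [gaussianMeasure, integrable_withDensity_iff hv.ennreal_ofReal
    (Filter.Eventually.of_forall fun δ => ENNReal.ofReal_lt_top)]
  simp only [hto]

open Finset in
lemma gauss_norm4_key (d : ℕ) (σ : ℝ) (hσ : 0 < σ) :
    Integrable (fun δ : EuclideanSpace ℝ (Fin d) => ‖δ‖ ^ 4) (gaussianMeasure d σ) ∧
    ∫ δ, ‖δ‖ ^ 4 ∂(gaussianMeasure d σ) = σ ^ 4 * d * (d + 2) := by
  set b : ℝ := (2 * σ ^ 2)⁻¹ with hbdef
  have hb : 0 < b := by positivity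
  set C : ℝ := (2 * π * σ ^ 2) ^ (-(d : ℝ) / 2) with hCdef
  set A : ℝ := Real.sqrt (π / b) with hAdef
  have hA : 0 < A := Real.sqrt_pos.mpr (by positivity)
  have hA2 : A ^ 2 = 2 * π * σ ^ 2 := by
    rw [hAdef, Real.sq_sqrt (by positivity), hbdef]
    field_simp
  have hCA : C * A ^ d = 1 := by
    have hC' : C = (A ^ d)⁻¹ := by
      rw [hCdef, ← hA2, ← Real.rpow_natCast A 2, ← Real.rpow_mul hA.le,
        show ((2 : ℕ) : ℝ) * (-(d : ℝ) / 2) = -(d : ℝ) by push_cast; ring,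
        Real.rpow_neg hA.le, Real.rpow_natCast]
    rw [hC', inv_mul_cancel₀ (by positivity)]
  -- one-dimensional integrals
  have h0 : ∫ t : ℝ, t ^ 0 * Real.exp (-b * t ^ 2) = A := by
    simp only [pow_zero, one_mul]; exact integral_gaussian b
  have h2 : ∫ t : ℝ, t ^ 2 * Real.exp (-b * t ^ 2) = σ ^ 2 * A := by
    rw [gauss_I2 hb, ← hAdef, hbdef]; field_simp
  have h4 : ∫ t : ℝ, t ^ 4 * Real.exp (-b * t ^ 2) = 3 * σ ^ 4 * A := by
    rw [gauss_I4 hb, ← hAdef, hbdef]; field_simp; ring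
  set F : Fin d → Fin d → Fin d → ℝ → ℝ := fun i j k t =>
    t ^ ((if k = i then 2 else 0) + (if k = j then 2 else 0)) * Real.exp (-b * t ^ 2) with hFdef
  have hFint : ∀ i j k, Integrable (F i j k) := fun i j k =>
    integrable_pow_mul_gauss hb _
  have hFvalEq : ∀ i k : Fin d, (∫ t, F i i k t) = A * (if k = i then 3 * σ ^ 4 else 1) := by
    intro i k
    simp only [hFdef]
    by_cases h : k = i
    · rw [show ((if k = i then 2 else 0) + (if k = i then 2 else 0) : ℕ) = 4 by simp [h],
        h4, if_pos h]
      ring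
    · rw [show ((if k = i then 2 else 0) + (if k = i then 2 else 0) : ℕ) = 0 by simp [h],
        h0, if_neg h]
      ring
  have hFvalNe : ∀ i j : Fin d, i ≠ j → ∀ k,
      (∫ t, F i j k t) = A * ((if k = i then σ ^ 2 else 1) * (if k = j then σ ^ 2 else 1)) := by
    intro i j hij k
    simp only [hFdef]
    by_cases h1 : k = i
    · have h2' : ¬ k = j := fun h => hij (h1.symm.trans h)
      rw [show ((if k = i then 2 else 0) + (if k = j then 2 else 0) : ℕ) = 2 by simp [h1, h2', hij],
        h2, if_pos h1, if_neg h2']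
      ring
    · by_cases h2' : k = j
      · rw [show ((if k = i then 2 else 0) + (if k = j then 2 else 0) : ℕ) = 2 by simp [h1, h2', hij, Ne.symm hij],
          h2, if_neg h1, if_pos h2']
        ring
      · rw [show ((if k = i then 2 else 0) + (if k = j then 2 else 0) : ℕ) = 0 by simp [h1, h2'],
          h0, if_neg h1, if_neg h2']
        ring
  have hcard : (Finset.univ : Finset (Fin d)).card = d := by simp
  have hprod : ∀ i j : Fin d, (∏ k, ∫ t, F i j k t)
      = A ^ d * σ ^ 4 * (if i = j then 3 else 1) := by
    intro i j
    rcases eq_or_ne i j with rfl | hij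
    · rw [Finset.prod_congr rfl fun k _ => hFvalEq i k, Finset.prod_mul_distrib,
        Finset.prod_const, hcard, Finset.prod_ite_eq', if_pos (Finset.mem_univ i), if_pos rfl]
      ring
    · rw [Finset.prod_congr rfl fun k _ => hFvalNe i j hij k, Finset.prod_mul_distrib,
        Finset.prod_const, hcard, Finset.prod_mul_distrib, Finset.prod_ite_eq',
        Finset.prod_ite_eq', if_pos (Finset.mem_univ i), if_pos (Finset.mem_univ j), if_neg hij]
      ring
  -- transfer to the product space
  set e := (MeasurableEquiv.toLp 2 (Fin d → ℝ)).symm with hedef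
  have mp := (EuclideanSpace.volume_preserving_symm_measurableEquiv_toLp (Fin d)).symm
  have hnorm : ∀ x : Fin d → ℝ,
      ‖(e.symm x : EuclideanSpace ℝ (Fin d))‖ ^ 2 = ∑ i, (x i) ^ 2 := by
    intro x
    rw [EuclideanSpace.norm_eq, Real.sq_sqrt (Finset.sum_nonneg fun i _ => by positivity)]
    simp [hedef, sq_abs]
  set G : (Fin d → ℝ) → ℝ :=
    fun x => C * ∑ p : Fin d × Fin d, ∏ k, F p.1 p.2 k (x k) with hGdef
  have hHG : ∀ x : Fin d → ℝ,
      (C * Real.exp (-‖(e.symm x : EuclideanSpace ℝ (Fin d))‖ ^ 2 / (2 * σ ^ 2)))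
        * ‖(e.symm x : EuclideanSpace ℝ (Fin d))‖ ^ 4 = G x := by
    intro x
    have h1 : ‖(e.symm x : EuclideanSpace ℝ (Fin d))‖ ^ 4 = (∑ i, (x i) ^ 2) ^ 2 := by
      rw [show (4 : ℕ) = 2 * 2 from rfl, pow_mul, hnorm]
    have h2' : -‖(e.symm x : EuclideanSpace ℝ (Fin d))‖ ^ 2 / (2 * σ ^ 2)
        = -b * ∑ i, (x i) ^ 2 := by
      rw [hnorm, hbdef]; field_simp
    rw [h1, h2']
    have h3 : ∀ p : Fin d × Fin d, ∏ k, F p.1 p.2 k (x k)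
        = ((x p.1) ^ 2 * (x p.2) ^ 2) * Real.exp (-b * ∑ i, (x i) ^ 2) := by
      intro p
      have hsplit : ∀ k : Fin d, F p.1 p.2 k (x k)
          = (if k = p.1 then (x k) ^ 2 else 1) * ((if k = p.2 then (x k) ^ 2 else 1)
            * Real.exp (-b * (x k) ^ 2)) := by
        intro k
        simp only [hFdef]
        split_ifs <;> ring
      rw [Finset.prod_congr rfl fun k _ => hsplit k, Finset.prod_mul_distrib,
        Finset.prod_mul_distrib, ← Real.exp_sum, ← Finset.mul_sum]
      simp only [Finset.prod_ite_eq', Finset.mem_univ, if_true]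
      ring
    simp only [hGdef]
    rw [Finset.sum_congr rfl fun p _ => h3 p, ← Finset.sum_mul]
    have h4' : ∑ p : Fin d × Fin d, (x p.1) ^ 2 * (x p.2) ^ 2 = (∑ i, (x i) ^ 2) ^ 2 := by
      simp only [Fintype.sum_prod_type]
      rw [sq, Finset.sum_mul_sum]
    rw [h4']
    ring
  have hIntG : Integrable G := by
    simp only [hGdef]
    apply Integrable.const_mul
    apply integrable_finset_sum
    intro p _
    exact Integrable.fintype_prod (f := fun k => F p.1 p.2 k) fun k => hFint _ _ _
  have hcount : ∑ p : Fin d × Fin d, (if p.1 = p.2 then (3:ℝ) else 1) = d * (d + 2) := by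
    simp only [Fintype.sum_prod_type]
    have hinner : ∀ i : Fin d, (∑ j : Fin d, if i = j then (3:ℝ) else 1) = d + 2 := by
      intro i
      rw [Finset.sum_congr rfl (fun j _ =>
          show (if i = j then (3:ℝ) else 1) = (if i = j then (2:ℝ) else 0) + 1 from by
            split_ifs <;> norm_num),
        Finset.sum_add_distrib, Finset.sum_ite_eq, Finset.sum_const,
        if_pos (Finset.mem_univ i)]
      simp [Fintype.card_fin]
      ring
    rw [Finset.sum_congr rfl fun i _ => hinner i, Finset.sum_const]
    simp [Fintype.card_fin]
    ring
  have hIntValG : ∫ x, G x = σ ^ 4 * d * (d + 2) := by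
    simp only [hGdef]
    rw [integral_const_mul,
      integral_finset_sum _ fun p _ =>
        Integrable.fintype_prod (f := fun k => F p.1 p.2 k) fun k => hFint _ _ _,
      Finset.sum_congr rfl fun p _ =>
        MeasureTheory.integral_fintype_prod_eq_prod (ι := Fin d) (fun k => F p.1 p.2 k),
      Finset.sum_congr rfl fun p _ => hprod p.1 p.2, ← Finset.mul_sum, hcount,
      show C * (A ^ d * σ ^ 4 * (d * (d + 2))) = (C * A ^ d) * (σ ^ 4 * (d * (d + 2))) by ring,
      hCA, one_mul]
    ring
  constructor
  · rw [gaussianMeasure_integrable_iff d σ, ← hCdef,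
      ← mp.integrable_comp_emb (MeasurableEquiv.measurableEmbedding _)]
    have hcomp : ((fun δ : EuclideanSpace ℝ (Fin d) =>
        ‖δ‖ ^ 4 * (C * Real.exp (-‖δ‖ ^ 2 / (2 * σ ^ 2)))) ∘ e.symm) = G := by
      funext y
      simp only [Function.comp_apply]
      rw [← hHG y]
      ring
    rw [hcomp]
    exact hIntG
  · rw [gaussianMeasure_integral d σ, ← hCdef,
      ← mp.integral_comp (MeasurableEquiv.measurableEmbedding _)
        (fun δ : EuclideanSpace ℝ (Fin d) =>
          C * Real.exp (-‖δ‖ ^ 2 / (2 * σ ^ 2)) * ‖δ‖ ^ 4)]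
    rw [show (fun x : Fin d → ℝ =>
        C * Real.exp (-‖(e.symm x : EuclideanSpace ℝ (Fin d))‖ ^ 2 / (2 * σ ^ 2))
          * ‖(e.symm x : EuclideanSpace ℝ (Fin d))‖ ^ 4) = G from funext hHG]
    exact hIntValG

end MultiDim

theorem antithetic_gradient_estimator_second_moment (d : ℕ) (hd : 0 < d)
    (σ : ℝ) (hσ : 0 < σ)
    (f : EuclideanSpace ℝ (Fin d) → ℝ)
    (L : ℝ) (hf : ∀ x y, |f x - f y| ≤ L * ‖x - y‖) :
    ∀ x, (∫ δ, ‖((f (x + δ) - f (x - δ)) / (2 * σ ^ 2)) • δ‖ ^ 2 ∂(gaussianMeasure d σ)) ≤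
      L ^ 2 * d * (d + 2) := by
  intro x
  have hL : 0 ≤ L := by
    have h := hf (EuclideanSpace.single (⟨0, hd⟩ : Fin d) (1 : ℝ)) 0
    have h1 : ‖EuclideanSpace.single (⟨0, hd⟩ : Fin d) (1 : ℝ) - 0‖ = 1 := by
      simp [EuclideanSpace.norm_single]
    rw [h1, mul_one] at h
    exact le_trans (abs_nonneg _) h
  obtain ⟨hint, hval⟩ := gauss_norm4_key d σ hσ
  have hbound : ∀ δ : EuclideanSpace ℝ (Fin d),
      ‖((f (x + δ) - f (x - δ)) / (2 * σ ^ 2)) • δ‖ ^ 2 ≤ L ^ 2 / σ ^ 4 * ‖δ‖ ^ 4 := by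
    intro δ
    set c : ℝ := (f (x + δ) - f (x - δ)) / (2 * σ ^ 2) with hcdef
    have hdiff : |f (x + δ) - f (x - δ)| ≤ L * (2 * ‖δ‖) := by
      have h := hf (x + δ) (x - δ)
      have h2 : ‖x + δ - (x - δ)‖ = 2 * ‖δ‖ := by
        have h3 : x + δ - (x - δ) = (2 : ℝ) • δ := by
          rw [two_smul]; abel
        rw [h3, norm_smul]
        simp
      rw [h2] at h
      exact h
    have hc : |c| ≤ L * ‖δ‖ / σ ^ 2 := by
      have hstep : |f (x + δ) - f (x - δ)| / (2 * σ ^ 2) ≤ (L * (2 * ‖δ‖)) / (2 * σ ^ 2) := by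
        gcongr
      rw [hcdef, abs_div, abs_of_pos (show (0:ℝ) < 2 * σ ^ 2 by positivity)]
      refine hstep.trans_eq ?_
      field_simp
    have h5 : ‖c • δ‖ ^ 2 = |c| ^ 2 * ‖δ‖ ^ 2 := by
      rw [norm_smul, Real.norm_eq_abs, mul_pow]
    have h6 : |c| ^ 2 ≤ (L * ‖δ‖ / σ ^ 2) ^ 2 := pow_le_pow_left₀ (abs_nonneg c) hc 2
    calc ‖c • δ‖ ^ 2 = |c| ^ 2 * ‖δ‖ ^ 2 := h5
      _ ≤ (L * ‖δ‖ / σ ^ 2) ^ 2 * ‖δ‖ ^ 2 := by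
          apply mul_le_mul_of_nonneg_right h6 (by positivity)
      _ = L ^ 2 / σ ^ 4 * ‖δ‖ ^ 4 := by field_simp
  calc (∫ δ, ‖((f (x + δ) - f (x - δ)) / (2 * σ ^ 2)) • δ‖ ^ 2 ∂(gaussianMeasure d σ))
      ≤ ∫ δ, L ^ 2 / σ ^ 4 * ‖δ‖ ^ 4 ∂(gaussianMeasure d σ) := by
        apply integral_mono_of_nonneg
        · exact Filter.Eventually.of_forall fun δ => by positivity
        · exact hint.const_mul _
        · exact Filter.Eventually.of_forall hbound
    _ = L ^ 2 / σ ^ 4 * (σ ^ 4 * d * (d + 2)) := by rw [integral_const_mul, hval]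
    _ = L ^ 2 * d * (d + 2) := by field_simp
end

section
/- Let f : ℝ^d → ℝ be continuously differentiable with M-Lipschitz gradient (so that |f(x+δ) + f(x−δ) − 2f(x)| ≤ M‖δ‖² for all x, δ), and σ > 0. Then for every x ∈ ℝ^d, the second moment of the antithetic-variable Stein Laplacian estimator integrand is bounded independently of σ: E_{δ∼N(0,σ²I)}[ (((‖δ‖² − σ²d)/(2σ⁴)) · (f(x+δ) + f(x−δ) − 2f(x)))² ] ≤ (M²/4)·(2d³ + 28d² + 48d). -/
open MeasureTheory Real

open Set

lemma radial_int {a b : ℝ} (ha : 0 < a) (hb : 0 < b) :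
    ∫ y in Ioi (0:ℝ), y ^ (a - 1) * Real.exp (-(b * y ^ 2)) =
      1 / 2 * ((1 / b) ^ (a / 2) * Real.Gamma (a / 2)) := by
  have key := integral_comp_rpow_Ioi_of_pos
    (g := fun y : ℝ => (1 / 2 : ℝ) * (y ^ (a / 2 - 1) * Real.exp (-(b * y)))) (p := 2) two_pos
  have hR : ∫ y in Ioi (0:ℝ), (1/2 : ℝ) * (y ^ (a/2 - 1) * Real.exp (-(b*y)))
      = 1/2 * ((1/b) ^ (a/2) * Real.Gamma (a/2)) := by
    rw [MeasureTheory.integral_const_mul,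
      Real.integral_rpow_mul_exp_neg_mul_Ioi (by positivity : 0 < a / 2) hb]
  rw [← hR, ← key]
  refine setIntegral_congr_fun measurableSet_Ioi fun x hx => ?_
  have hx0 : (0:ℝ) < x := hx
  simp only [smul_eq_mul]
  have h2 : x ^ (2:ℝ) = x ^ (2:ℕ) := by
    rw [← Real.rpow_natCast x 2]; norm_num
  have h21 : x ^ ((2:ℝ)-1) = x := by
    rw [show (2:ℝ)-1 = 1 by norm_num, Real.rpow_one]
  have hxp : (x ^ (2:ℕ) : ℝ) ^ (a / 2 - 1) = x ^ (a - 2) := by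
    rw [← Real.rpow_natCast x 2, ← Real.rpow_mul hx0.le]
    congr 1; push_cast; ring
  have hxx : x * x ^ (a-2) = x ^ (a-1) := by
    calc x * x ^ (a-2) = x ^ (1:ℝ) * x ^ (a-2) := by rw [Real.rpow_one]
      _ = x ^ (1 + (a-2)) := (Real.rpow_add hx0 _ _).symm
      _ = x ^ (a-1) := by congr 1; ring
  rw [h21, h2, hxp, ← hxx]
  ring

lemma gauss_moment_s15 (d : ℕ) (hd : 0 < d) (σ : ℝ) (hσ : 0 < σ) (k : ℕ) :
    ∫ x : EuclideanSpace ℝ (Fin d),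
      (2 * π * σ ^ 2) ^ (-(d : ℝ) / 2) * Real.exp (-‖x‖ ^ 2 / (2 * σ ^ 2)) * ‖x‖ ^ (2 * k)
    = σ ^ (2 * k) * (2 ^ k * Real.Gamma ((d : ℝ) / 2 + k) / Real.Gamma ((d : ℝ) / 2)) := by
  haveI : Nonempty (Fin d) := Fin.pos_iff_nonempty.mp hd
  haveI : Nontrivial (EuclideanSpace ℝ (Fin d)) :=
    Module.nontrivial_of_finrank_pos (by simp [finrank_euclideanSpace_fin, hd] :
      0 < Module.finrank ℝ (EuclideanSpace ℝ (Fin d)))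
  have hrad := MeasureTheory.integral_fun_norm_addHaar (volume : Measure (EuclideanSpace ℝ (Fin d)))
    (fun r : ℝ => (2 * π * σ ^ 2) ^ (-(d : ℝ) / 2) * Real.exp (-r ^ 2 / (2 * σ ^ 2)) * r ^ (2 * k))
  simp only [finrank_euclideanSpace_fin] at hrad
  rw [hrad]
  -- volume of the unit ball
  have hΓ1pos : 0 < Real.Gamma ((d:ℝ)/2 + 1) := Real.Gamma_pos_of_pos (by positivity)
  have hball : ((volume (Metric.ball (0 : EuclideanSpace ℝ (Fin d)) 1)).toReal)
      = Real.sqrt π ^ d / Real.Gamma ((d:ℝ)/2 + 1) := by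
    rw [EuclideanSpace.volume_ball]
    simp [Fintype.card_fin, ENNReal.toReal_ofReal (le_of_lt (by positivity :
      (0:ℝ) < Real.sqrt π ^ d / Real.Gamma ((d:ℝ)/2 + 1)))]
  rw [measureReal_def, hball]
  -- inner integral
  have hb : (0:ℝ) < 1 / (2 * σ ^ 2) := by positivity
  have hinner : ∫ y in Ioi (0:ℝ), y ^ (d - 1) •
      ((2 * π * σ ^ 2) ^ (-(d : ℝ) / 2) * Real.exp (-y ^ 2 / (2 * σ ^ 2)) * y ^ (2 * k))
      = (2 * π * σ ^ 2) ^ (-(d : ℝ) / 2) *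
        ∫ y in Ioi (0:ℝ), y ^ (((d:ℝ) + 2*k) - 1) * Real.exp (-(1/(2*σ^2) * y ^ 2)) := by
    rw [← MeasureTheory.integral_const_mul]
    refine setIntegral_congr_fun measurableSet_Ioi fun y hy => ?_
    have hy0 : (0:ℝ) < y := hy
    have hyp : y ^ (((d:ℝ) + 2*k) - 1) = y ^ (d - 1 + 2*k : ℕ) := by
      rw [← Real.rpow_natCast y (d - 1 + 2*k)]
      congr 1
      push_cast [Nat.cast_sub hd]
      ring
    have hexp : Real.exp (-y ^ 2 / (2 * σ ^ 2)) = Real.exp (-(1/(2*σ^2) * y ^ 2)) := by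
      congr 1; ring
    rw [hyp, smul_eq_mul, pow_add, hexp]
    ring
  rw [hinner, radial_int (by positivity : (0:ℝ) < (d:ℝ) + 2*k) hb]
  rw [one_div_one_div]
  -- now pure constant algebra
  have hγpos : 0 < Real.Gamma ((d:ℝ)/2) := Real.Gamma_pos_of_pos (by positivity)
  have hΓ1 : Real.Gamma ((d:ℝ)/2 + 1) = ((d:ℝ)/2) * Real.Gamma ((d:ℝ)/2) :=
    Real.Gamma_add_one (by positivity : (0:ℝ) < (d:ℝ)/2).ne'
  have hΓarg : ((d:ℝ) + 2*k)/2 = (d:ℝ)/2 + k := by ring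
  have hsqrt : Real.sqrt π ^ d = π ^ ((d:ℝ)/2) := by
    rw [Real.sqrt_eq_rpow, ← Real.rpow_natCast (π ^ ((1:ℝ)/2)) d, ← Real.rpow_mul pi_pos.le]
    congr 1; ring
  have hsplit : (2 * π * σ ^ 2) ^ (-(d : ℝ) / 2)
      = (2 * σ ^ 2) ^ (-(d : ℝ) / 2) * π ^ (-(d : ℝ) / 2) := by
    rw [show (2 * π * σ ^ 2 : ℝ) = (2 * σ ^ 2) * π by ring,
      Real.mul_rpow (by positivity) pi_pos.le]
  have hc2 : (2 * σ ^ 2 : ℝ) ^ ((d:ℝ)/2 + (k:ℕ))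
      = (2 * σ ^ 2) ^ ((d:ℝ)/2) * (2 ^ k * σ ^ (2*k)) := by
    rw [Real.rpow_add (by positivity), Real.rpow_natCast]
    congr 1
    rw [mul_pow, pow_mul]
  have hPneg : π ^ (-(d:ℝ)/2) = (π ^ ((d:ℝ)/2))⁻¹ := by
    rw [neg_div, Real.rpow_neg pi_pos.le]
  have hQneg : (2 * σ ^ 2 : ℝ) ^ (-(d:ℝ)/2) = ((2 * σ ^ 2 : ℝ) ^ ((d:ℝ)/2))⁻¹ := by
    rw [neg_div, Real.rpow_neg (by positivity)]
  have hd0 : (d:ℝ) ≠ 0 := Nat.cast_ne_zero.mpr hd.ne'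
  have hP0 : π ^ ((d:ℝ)/2) ≠ 0 := (Real.rpow_pos_of_pos pi_pos _).ne'
  have hQ0 : (2 * σ ^ 2 : ℝ) ^ ((d:ℝ)/2) ≠ 0 :=
    (Real.rpow_pos_of_pos (by positivity) _).ne'
  rw [hΓarg, hsqrt, hsplit, hPneg, hQneg, hc2, hΓ1, nsmul_eq_mul, smul_eq_mul]
  field_simp

lemma integrable_exp_norm (d : ℕ) {b : ℝ} (hb : 0 < b) :
    Integrable (fun x : EuclideanSpace ℝ (Fin d) => Real.exp (-(b * ‖x‖ ^ 2))) := by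
  have h := (GaussianFourier.integrable_cexp_neg_mul_sq_norm_add
    (V := EuclideanSpace ℝ (Fin d)) (b := (b : ℂ)) (by simpa using hb) 0 0).norm
  convert h using 2 with v
  rw [Complex.norm_exp]
  have h2 : ((-(b:ℂ)) * (‖v‖:ℂ) ^ 2 + 0 * ((inner ℝ 0 v : ℝ):ℂ))
      = ((-(b * ‖v‖ ^ 2) : ℝ) : ℂ) := by push_cast; ring
  rw [h2, Complex.ofReal_re]

lemma integrable_pow_exp (d k : ℕ) {b : ℝ} (hb : 0 < b) :
    Integrable (fun x : EuclideanSpace ℝ (Fin d) =>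
      ‖x‖ ^ (2 * k) * Real.exp (-(b * ‖x‖ ^ 2))) := by
  have hmeas : AEStronglyMeasurable (fun x : EuclideanSpace ℝ (Fin d) =>
      ‖x‖ ^ (2 * k) * Real.exp (-(b * ‖x‖ ^ 2))) volume := by
    refine Continuous.aestronglyMeasurable ?_
    continuity
  refine ((integrable_exp_norm d (by positivity : (0:ℝ) < b/2)).const_mul
    ((k.factorial : ℝ) * (2 / b) ^ k)).mono' hmeas ?_
  filter_upwards with x
  have h1 : (0:ℝ) ≤ ‖x‖ ^ (2*k) * Real.exp (-(b * ‖x‖ ^ 2)) := by positivity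
  rw [Real.norm_eq_abs, abs_of_nonneg h1]
  have key : ((b/2) * ‖x‖ ^ 2) ^ k / (k.factorial : ℝ) ≤ Real.exp ((b/2) * ‖x‖ ^ 2) :=
    Real.pow_div_factorial_le_exp _ (by positivity) k
  have hfac : (0:ℝ) < (k.factorial : ℝ) := by positivity
  have h2 : ‖x‖ ^ (2*k) ≤ (k.factorial : ℝ) * (2/b) ^ k * Real.exp ((b/2) * ‖x‖ ^ 2) := by
    have := (div_le_iff₀ hfac).mp key
    calc ‖x‖ ^ (2*k) = ((b/2) * ‖x‖ ^ 2) ^ k * (2/b) ^ k := by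
          rw [mul_pow, pow_mul]
          rw [mul_comm ((b/2)^k), mul_assoc, ← mul_pow]
          field_simp
          rw [one_pow, mul_one]
      _ ≤ (Real.exp ((b/2) * ‖x‖ ^ 2) * (k.factorial : ℝ)) * (2/b) ^ k := by
          apply mul_le_mul_of_nonneg_right this (by positivity)
      _ = (k.factorial : ℝ) * (2/b) ^ k * Real.exp ((b/2) * ‖x‖ ^ 2) := by ring
  calc ‖x‖ ^ (2*k) * Real.exp (-(b * ‖x‖ ^ 2))
      ≤ ((k.factorial : ℝ) * (2/b) ^ k * Real.exp ((b/2) * ‖x‖ ^ 2)) * Real.exp (-(b * ‖x‖ ^ 2)) :=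
        mul_le_mul_of_nonneg_right h2 (Real.exp_pos _).le
    _ = (k.factorial : ℝ) * (2/b) ^ k * Real.exp (-(b/2 * ‖x‖ ^ 2)) := by
        rw [mul_assoc, ← Real.exp_add]; congr 2; ring

lemma second_diff_bound {d : ℕ} (f : EuclideanSpace ℝ (Fin d) → ℝ) (hf : ContDiff ℝ 1 f)
    (M : ℝ) (hM : ∀ x y, ‖gradient f x - gradient f y‖ ≤ M * ‖x - y‖)
    (x δ : EuclideanSpace ℝ (Fin d)) :
    |f (x + δ) + f (x - δ) - 2 * f x| ≤ M * ‖δ‖ ^ 2 := by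
  have hdiff : Differentiable ℝ f := hf.differentiable one_ne_zero
  set φ' : ℝ → ℝ := fun t => (fderiv ℝ f (x + t • δ)) δ - (fderiv ℝ f (x - t • δ)) δ with hφ'
  have hderiv : ∀ t : ℝ, HasDerivAt (fun s => f (x + s • δ) + f (x - s • δ)) (φ' t) t := by
    intro t
    have h1 : HasDerivAt (fun s : ℝ => x + s • δ) δ t := by
      simpa using ((hasDerivAt_id t).smul_const δ).const_add x
    have h2 : HasDerivAt (fun s : ℝ => x - s • δ) (-δ) t := by
      simpa [sub_eq_add_neg, smul_neg] using
        ((hasDerivAt_id t).smul_const (-δ)).const_add x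
    have hA := (hdiff (x + t • δ)).hasFDerivAt.comp_hasDerivAt t h1
    have hB := (hdiff (x - t • δ)).hasFDerivAt.comp_hasDerivAt t h2
    have := hA.add hB
    exact this.congr_deriv (by simp [hφ', map_neg, sub_eq_add_neg])
  -- continuity of φ'
  have hcont : Continuous φ' := by
    have hc : Continuous (fderiv ℝ f) := (hf.continuous_fderiv one_ne_zero)
    have csm : Continuous fun t : ℝ => t • δ := continuous_id.smul continuous_const
    have c1 : Continuous fun t : ℝ => x + t • δ := continuous_const.add csm
    have c2 : Continuous fun t : ℝ => x - t • δ := continuous_const.sub csm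
    exact ((hc.comp c1).clm_apply continuous_const).sub
      ((hc.comp c2).clm_apply continuous_const)
  have hFTC := intervalIntegral.integral_eq_sub_of_hasDerivAt
    (fun t _ => hderiv t) (hcont.intervalIntegrable 0 1)
  have hval : f (x + δ) + f (x - δ) - 2 * f x = ∫ t in (0:ℝ)..1, φ' t := by
    rw [hFTC]; simp; ring
  rw [hval]
  -- bound on φ'
  have hbound : ∀ t ∈ Icc (0:ℝ) 1, |φ' t| ≤ 2 * M * ‖δ‖ ^ 2 * t := by
    intro t ht
    have heq : φ' t = ((fderiv ℝ f (x + t • δ)) - (fderiv ℝ f (x - t • δ))) δ := by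
      simp [hφ', ContinuousLinearMap.sub_apply]
    have hgrad : ‖(fderiv ℝ f (x + t • δ)) - (fderiv ℝ f (x - t • δ))‖
        = ‖gradient f (x + t • δ) - gradient f (x - t • δ)‖ := by
      rw [gradient, gradient, ← LinearIsometryEquiv.map_sub, LinearIsometryEquiv.norm_map]
    have h1 : |φ' t| ≤ ‖(fderiv ℝ f (x + t • δ)) - (fderiv ℝ f (x - t • δ))‖ * ‖δ‖ := by
      rw [heq, ← Real.norm_eq_abs]
      exact ContinuousLinearMap.le_opNorm _ δ
    have h2 : ‖(x + t • δ) - (x - t • δ)‖ = 2 * t * ‖δ‖ := by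
      have : (x + t • δ) - (x - t • δ) = (2 * t) • δ := by
        module
      rw [this, norm_smul, Real.norm_eq_abs, abs_of_nonneg (by linarith [ht.1] : (0:ℝ) ≤ 2 * t)]
    calc |φ' t| ≤ ‖(fderiv ℝ f (x + t • δ)) - (fderiv ℝ f (x - t • δ))‖ * ‖δ‖ := h1
      _ ≤ (M * ‖(x + t • δ) - (x - t • δ)‖) * ‖δ‖ := by
          refine mul_le_mul_of_nonneg_right ?_ (norm_nonneg _)
          rw [hgrad]
          exact hM _ _
      _ = 2 * M * ‖δ‖ ^ 2 * t := by rw [h2]; ring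
  calc |∫ t in (0:ℝ)..1, φ' t| ≤ ∫ t in (0:ℝ)..1, |φ' t| :=
        intervalIntegral.abs_integral_le_integral_abs zero_le_one
    _ ≤ ∫ t in (0:ℝ)..1, 2 * M * ‖δ‖ ^ 2 * t := by
        refine intervalIntegral.integral_mono_on zero_le_one
          (hcont.abs.intervalIntegrable 0 1)
          (((continuous_const.mul continuous_id).intervalIntegrable 0 1)) hbound
    _ = M * ‖δ‖ ^ 2 := by
        rw [intervalIntegral.integral_const_mul, integral_id]
        ring

theorem antithetic_laplacian_estimator_second_moment (d : ℕ) (hd : 0 < d)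
    (σ : ℝ) (hσ : 0 < σ)
    (f : EuclideanSpace ℝ (Fin d) → ℝ) (hf : ContDiff ℝ 1 f)
    (M : ℝ) (hM : ∀ x y, ‖gradient f x - gradient f y‖ ≤ M * ‖x - y‖) :
    ∀ x, (∫ δ, (((‖δ‖ ^ 2 - σ ^ 2 * d) / (2 * σ ^ 4)) *
          (f (x + δ) + f (x - δ) - 2 * f x)) ^ 2 ∂(gaussianMeasure d σ)) ≤
      M ^ 2 / 4 * (2 * (d : ℝ) ^ 3 + 28 * (d : ℝ) ^ 2 + 48 * d) := by
  intro x
  set dens : EuclideanSpace ℝ (Fin d) → ℝ :=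
    fun δ => (2 * π * σ ^ 2) ^ (-(d : ℝ) / 2) * Real.exp (-‖δ‖ ^ 2 / (2 * σ ^ 2)) with hdens
  have hdensnn : ∀ δ, 0 ≤ dens δ := fun δ => by positivity
  have hdenscont : Continuous dens := by
    apply Continuous.mul continuous_const
    exact Real.continuous_exp.comp (by fun_prop)
  have hb : (0:ℝ) < 1 / (2 * σ ^ 2) := by positivity
  set ψ : EuclideanSpace ℝ (Fin d) → ℝ :=
    fun δ => ((‖δ‖ ^ 2 - σ ^ 2 * d) / (2 * σ ^ 4)) ^ 2 * (M * ‖δ‖ ^ 2) ^ 2 with hψ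
  set g : ℕ → EuclideanSpace ℝ (Fin d) → ℝ :=
    fun k δ => (2 * π * σ ^ 2) ^ (-(d : ℝ) / 2) *
      (‖δ‖ ^ (2 * k) * Real.exp (-(1 / (2 * σ ^ 2) * ‖δ‖ ^ 2))) with hg
  have hgint : ∀ k : ℕ, Integrable (g k) volume := fun k =>
    (integrable_pow_exp d k hb).const_mul _
  have hgval : ∀ k : ℕ, ∫ δ, g k δ =
      σ ^ (2 * k) * (2 ^ k * Real.Gamma ((d : ℝ) / 2 + k) / Real.Gamma ((d : ℝ) / 2)) := by
    intro k
    rw [← gauss_moment_s15 d hd σ hσ k]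
    congr 1
    funext δ
    have he : Real.exp (-‖δ‖ ^ 2 / (2 * σ ^ 2)) =
        Real.exp (-(1 / (2 * σ ^ 2) * ‖δ‖ ^ 2)) := by congr 1; ring
    simp only [hg, he]
    ring
  -- decomposition of ψ * dens
  have hdecomp : (fun δ => ψ δ * dens δ) =
      (fun δ => (M ^ 2 / (4 * σ ^ 8)) * g 4 δ +
        ((-(2 * σ ^ 2 * d * (M ^ 2 / (4 * σ ^ 8)))) * g 3 δ +
          (σ ^ 4 * (d:ℝ) ^ 2 * (M ^ 2 / (4 * σ ^ 8))) * g 2 δ)) := by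
    funext δ
    have he : Real.exp (-‖δ‖ ^ 2 / (2 * σ ^ 2)) =
        Real.exp (-(1 / (2 * σ ^ 2) * ‖δ‖ ^ 2)) := by congr 1; ring
    simp only [hψ, hg, hdens, he]
    have hσ8 : (σ:ℝ) ^ 8 ≠ 0 := by positivity
    field_simp
    ring
  have hmeasD : Measurable fun δ : EuclideanSpace ℝ (Fin d) => ENNReal.ofReal (dens δ) :=
    hdenscont.measurable.ennreal_ofReal
  -- integrability of ψ wrt gaussianMeasure
  have hψint : Integrable ψ (gaussianMeasure d σ) := by
    rw [gaussianMeasure]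
    rw [integrable_withDensity_iff hmeasD (by
      filter_upwards with δ; exact ENNReal.ofReal_lt_top)]
    have : (fun δ => ψ δ * (ENNReal.ofReal (dens δ)).toReal) = fun δ => ψ δ * dens δ := by
      funext δ; rw [ENNReal.toReal_ofReal (hdensnn δ)]
    rw [this, hdecomp]
    exact ((hgint 4).const_mul _).add (((hgint 3).const_mul _).add ((hgint 2).const_mul _))
  -- pointwise bound
  have hpt : ∀ δ, (((‖δ‖ ^ 2 - σ ^ 2 * d) / (2 * σ ^ 4)) *
      (f (x + δ) + f (x - δ) - 2 * f x)) ^ 2 ≤ ψ δ := by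
    intro δ
    rw [mul_pow, hψ]
    refine mul_le_mul_of_nonneg_left ?_ (sq_nonneg _)
    have h := second_diff_bound f hf M hM x δ
    calc (f (x + δ) + f (x - δ) - 2 * f x) ^ 2
        = |f (x + δ) + f (x - δ) - 2 * f x| ^ 2 := (sq_abs _).symm
      _ ≤ (M * ‖δ‖ ^ 2) ^ 2 := by
          apply pow_le_pow_left₀ (abs_nonneg _) h
  -- main bound
  have hmono : (∫ δ, (((‖δ‖ ^ 2 - σ ^ 2 * d) / (2 * σ ^ 4)) *
        (f (x + δ) + f (x - δ) - 2 * f x)) ^ 2 ∂(gaussianMeasure d σ))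
      ≤ ∫ δ, ψ δ ∂(gaussianMeasure d σ) := by
    refine integral_mono_of_nonneg ?_ hψint ?_
    · filter_upwards with δ; exact sq_nonneg _
    · filter_upwards with δ; exact hpt δ
  refine hmono.trans ?_
  -- compute ∫ ψ
  have hcalc : ∫ δ, ψ δ ∂(gaussianMeasure d σ) = ∫ δ, dens δ * ψ δ := by
    rw [gaussianMeasure]
    have hrfl : (fun δ : EuclideanSpace ℝ (Fin d) => ENNReal.ofReal (dens δ))
        = (fun δ => ((Real.toNNReal (dens δ) : NNReal) : ENNReal)) := rfl
    rw [hrfl, integral_withDensity_eq_integral_smul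
      (hdenscont.measurable.real_toNNReal) ψ]
    congr 1
    funext δ
    rw [NNReal.smul_def, Real.coe_toNNReal _ (hdensnn δ), smul_eq_mul]
  rw [hcalc]
  have hmul : (fun δ => dens δ * ψ δ) = (fun δ => ψ δ * dens δ) := by
    funext δ; ring
  rw [hmul, hdecomp]
  have i4 : Integrable (fun δ : EuclideanSpace ℝ (Fin d) =>
      (M ^ 2 / (4 * σ ^ 8)) * g 4 δ) volume := (hgint 4).const_mul _
  have i3 : Integrable (fun δ : EuclideanSpace ℝ (Fin d) =>
      (-(2 * σ ^ 2 * (d:ℝ) * (M ^ 2 / (4 * σ ^ 8)))) * g 3 δ) volume := (hgint 3).const_mul _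
  have i2 : Integrable (fun δ : EuclideanSpace ℝ (Fin d) =>
      (σ ^ 4 * (d:ℝ) ^ 2 * (M ^ 2 / (4 * σ ^ 8))) * g 2 δ) volume := (hgint 2).const_mul _
  have i32 : Integrable (fun δ : EuclideanSpace ℝ (Fin d) =>
      (-(2 * σ ^ 2 * (d:ℝ) * (M ^ 2 / (4 * σ ^ 8)))) * g 3 δ +
        (σ ^ 4 * (d:ℝ) ^ 2 * (M ^ 2 / (4 * σ ^ 8))) * g 2 δ) volume := i3.add i2
  rw [integral_add i4 i32, integral_add i3 i2, integral_const_mul, hgval 4,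
    integral_const_mul, hgval 3, integral_const_mul, hgval 2]
  -- Gamma arithmetic
  set c : ℝ := (d:ℝ)/2 with hc
  have hcpos : 0 < c := by positivity
  have hγpos : 0 < Real.Gamma c := Real.Gamma_pos_of_pos hcpos
  have e1 : Real.Gamma (c + 1) = c * Real.Gamma c := Real.Gamma_add_one hcpos.ne'
  have e2 : Real.Gamma (c + 2) = (c+1) * (c * Real.Gamma c) := by
    rw [show c + 2 = (c + 1) + 1 by ring, Real.Gamma_add_one (by positivity), e1]
  have e3 : Real.Gamma (c + 3) = (c+2) * ((c+1) * (c * Real.Gamma c)) := by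
    rw [show c + 3 = (c + 2) + 1 by ring, Real.Gamma_add_one (by positivity), e2]
  have e4 : Real.Gamma (c + 4) = (c+3) * ((c+2) * ((c+1) * (c * Real.Gamma c))) := by
    rw [show c + 4 = (c + 3) + 1 by ring, Real.Gamma_add_one (by positivity), e3]
  have hc2 : ((2:ℕ):ℝ) = 2 := by norm_num
  have hc3 : ((3:ℕ):ℝ) = 3 := by norm_num
  have hc4 : ((4:ℕ):ℝ) = 4 := by norm_num
  rw [hc2, hc3, hc4, e2, e3, e4]
  have hσ0 : σ ≠ 0 := hσ.ne'
  have hγ0 : Real.Gamma c ≠ 0 := hγpos.ne'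
  have hdc : (d:ℝ) = 2 * c := by rw [hc]; ring
  clear_value c
  rw [hdc]
  refine le_of_eq ?_
  field_simp
  ring
end
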